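/- Let f : ℝP^n → ℝ be continuous. Then for all k ∈ {1,…,n+1}, the k-th Krasnoselskii eigenvalue of the induced even function on S^n equals the k-th category eigenvalue hs_k of f on ℝP^n. -/

import Mathlib

open Set Metric Topology unitInterval

noncomputable section
open Classical

variable {B : Type*} [NormedAddCommGroup B] [NormedSpace ℝ B]

/-- There exists a continuous, odd, nonvanishing map `A → ℝ^m \ {0}`. -/
def HasOddMap (A : Set B) (m : ℕ) : Prop :=
  ∃ h : A → (Fin m → ℝ), Continuous h ∧ (∀ x, h x ≠ 0) ∧
    ∀ (x : A) (hx : -(x : B) ∈ A), h ⟨-(x : B), hx⟩ = -h x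

/-- Krasnoselskii genus. -/
def genus (A : Set B) : ℕ∞ :=
  if A = ∅ then 0 else sInf {m : ℕ∞ | ∃ k : ℕ, m = k ∧ HasOddMap A k}

/-- A set is contractible within the ambient space `Φ`. -/
def ContractibleIn {Φ : Type*} [TopologicalSpace Φ] (C : Set Φ) : Prop :=
  ∃ x₀ : Φ, ∃ H : C(↥C × ↥I, Φ),
    (∀ x : C, H (x, 0) = (x : Φ)) ∧ (∀ x : C, H (x, 1) = x₀)

/-- Lusternik–Schnirelmann subspace category (with closed covers). -/
def catLS {Φ : Type*} [TopologicalSpace Φ] (A : Set Φ) : ℕ∞ :=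
  sInf {m : ℕ∞ | ∃ k : ℕ, m = k ∧ ∃ C : Fin k → Set Φ,
    (∀ i, IsClosed (C i)) ∧ (∀ i, ContractibleIn (C i)) ∧ A ⊆ ⋃ i, C i}

/-- `X` can be brought to `Y` via a homotopy in `Φ` starting from the inclusion. -/
def BringsTo {Φ : Type*} [TopologicalSpace Φ] (X Y : Set Φ) : Prop :=
  ∃ H : C(↥X × ↥I, Φ),
    (∀ x : X, H (x, 0) = (x : Φ)) ∧ (∀ x : X, H (x, 1) ∈ Y)

/-- `a` lies in the homotopy significant spectrum of `f`. -/
def HomotopySignificant {Φ : Type*} [TopologicalSpace Φ] (f : Φ → ℝ) (a : ℝ) : Prop :=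
  ¬ BringsTo {x | f x ≤ a} {x | f x < a}

/-- `e` is a weak homotopy significant eigenvalue of `f`. -/
def WeakHomotopySignificant {Φ : Type*} [TopologicalSpace Φ] (f : Φ → ℝ) (e : ℝ) : Prop :=
  ∀ t₁ > e, ∀ t₂ < e, ¬ BringsTo {x | f x ≤ t₁} {x | f x ≤ t₂}

/-- The k-th Krasnoselskii eigenvalue of (the restriction to the unit sphere of) `f`. -/
def kr (f : B → ℝ) (k : ℕ) : EReal :=
  ⨅ A ∈ {A : Set B | A ⊆ sphere (0 : B) 1 ∧ IsClosed A ∧ A = -A ∧ (k : ℕ∞) ≤ genus A},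
    ⨆ x ∈ A, (f x : EReal)

/-- The k-th category (min-max) eigenvalue of `f`. -/
def hs {Φ : Type*} [TopologicalSpace Φ] (f : Φ → ℝ) (k : ℕ) : EReal :=
  ⨅ A ∈ {A : Set Φ | IsClosed A ∧ (k : ℕ∞) ≤ catLS A}, ⨆ x ∈ A, (f x : EReal)

/-- The antipodal setoid on the unit sphere of `B`. -/
def projSetoid (B : Type*) [NormedAddCommGroup B] [NormedSpace ℝ B] :
    Setoid ↥(sphere (0 : B) 1) where
  r x y := (x : B) = y ∨ (x : B) = -(y : B)
  iseqv := by
    constructor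
    · intro x; exact Or.inl rfl
    · rintro x y (h | h)
      · exact Or.inl h.symm
      · exact Or.inr (by rw [h, neg_neg])
    · rintro x y z (h | h) (h' | h')
      · exact Or.inl (h.trans h')
      · exact Or.inr (by rw [h, h'])
      · exact Or.inr (by rw [h, h'])
      · exact Or.inl (by rw [h, h', neg_neg])

/-- The projective space of `B`, as the quotient of the unit sphere by the antipodal map. -/
def Proj (B : Type*) [NormedAddCommGroup B] [NormedSpace ℝ B] := Quotient (projSetoid B)

instance : TopologicalSpace (Proj B) := instTopologicalSpaceQuotient


namespace KrHs

open RealInnerProductSpace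

variable {n : ℕ}

abbrev Eu (n : ℕ) := EuclideanSpace ℝ (Fin (n + 1))
abbrev Sp (n : ℕ) : Set (Eu n) := sphere (0 : Eu n) 1
abbrev Pr (n : ℕ) := Proj (Eu n)

def pr (x : ↥(Sp n)) : Pr n := Quotient.mk (projSetoid (Eu n)) x

lemma continuous_pr : Continuous (pr (n := n)) := continuous_quotient_mk'

lemma pr_surjective : Function.Surjective (pr (n := n)) := Quotient.exists_rep

def negS (x : ↥(Sp n)) : ↥(Sp n) :=
  ⟨-(x : Eu n), by
    have := x.2
    simp only [Sp, mem_sphere_zero_iff_norm] at this ⊢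
    simpa using this⟩

@[simp] lemma negS_coe (x : ↥(Sp n)) : ((negS x : ↥(Sp n)) : Eu n) = -(x : Eu n) := rfl

@[simp] lemma negS_negS (x : ↥(Sp n)) : negS (negS x) = x := by
  ext; simp

lemma pr_negS (x : ↥(Sp n)) : pr (negS x) = pr x :=
  Quotient.sound (Or.inr rfl)

lemma pr_exact {x y : ↥(Sp n)} (h : pr x = pr y) :
    x = y ∨ x = negS y := by
  have := Quotient.exact h
  rcases this with h' | h'
  · exact Or.inl (Subtype.ext h')
  · exact Or.inr (Subtype.ext h')

lemma isOpen_pr_iff {U : Set (Pr n)} : IsOpen U ↔ IsOpen (pr ⁻¹' U) :=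
  isOpen_coinduced

lemma isClosed_pr_iff {U : Set (Pr n)} : IsClosed U ↔ IsClosed (pr ⁻¹' U) := by
  rw [← isOpen_compl_iff, ← isOpen_compl_iff (s := pr ⁻¹' U), isOpen_pr_iff,
    Set.preimage_compl]

lemma isOpenMap_pr : IsOpenMap (pr (n := n)) := by
  intro U hU
  rw [isOpen_pr_iff]
  have : pr ⁻¹' (pr '' U) = U ∪ negS '' U := by
    ext x
    constructor
    · rintro ⟨y, hy, hxy⟩
      rcases pr_exact hxy.symm with rfl | rfl
      · exact Or.inl hy
      · exact Or.inr ⟨y, hy, rfl⟩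
    · rintro (hx | ⟨y, hy, rfl⟩)
      · exact ⟨x, hx, rfl⟩
      · exact ⟨y, hy, (pr_negS y).symm⟩
  rw [this]
  have hneg : Continuous (negS (n := n)) := by
    apply Continuous.subtype_mk
    exact continuous_subtype_val.neg
  have : negS '' U = negS ⁻¹' U := by
    ext x
    constructor
    · rintro ⟨y, hy, rfl⟩; simpa [negS_negS] using hy
    · intro hx; exact ⟨negS x, hx, negS_negS x⟩
  exact hU.union (this ▸ hU.preimage hneg)

lemma pr_preimage_image_of_symm {A : Set ↥(Sp n)} (hA : ∀ x ∈ A, negS x ∈ A) :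
    pr ⁻¹' (pr '' A) = A := by
  ext x
  constructor
  · rintro ⟨y, hy, hxy⟩
    rcases pr_exact hxy.symm with rfl | rfl
    · exact hy
    · exact hA y hy
  · intro hx; exact ⟨x, hx, rfl⟩

instance : CompactSpace ↥(Sp n) := Metric.sphere.compactSpace _ _

instance : CompactSpace (Pr n) := by
  constructor
  rw [← (pr_surjective (n := n)).range_eq, ← Set.image_univ]
  exact isCompact_univ.image continuous_pr

end KrHs
namespace KrHs
variable {n : ℕ}

/-- The Veronese-type embedding used only to prove `Pr n` is Hausdorff. -/
def verf (x : ↥(Sp n)) : Fin (n+1) → Fin (n+1) → ℝ :=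
  fun i j => (x : Eu n) i * (x : Eu n) j

lemma verf_well (x y : ↥(Sp n)) (h : (projSetoid (Eu n)).r x y) : verf x = verf y := by
  rcases h with h | h
  · unfold verf; rw [h]
  · funext i j
    simp only [verf, h]
    have : ∀ i, ((-(y : Eu n)) i) = -((y : Eu n) i) := fun i => rfl
    rw [this, this]; ring

def ver (q : Pr n) : Fin (n+1) → Fin (n+1) → ℝ :=
  Quotient.lift verf verf_well q

lemma continuous_verf : Continuous (verf (n := n)) := by
  apply continuous_pi; intro i
  apply continuous_pi; intro j
  have hc : ∀ i : Fin (n+1), Continuous fun x : ↥(Sp n) => (x : Eu n) i := by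
    intro i
    exact ((continuous_apply i).comp (PiLp.continuous_ofLp 2 _)).comp continuous_subtype_val
  exact (hc i).mul (hc j)

lemma continuous_ver : Continuous (ver (n := n)) := by
  apply continuous_coinduced_dom.mpr
  exact continuous_verf

lemma exists_coord_ne_zero (x : ↥(Sp n)) : ∃ i, (x : Eu n) i ≠ 0 := by
  by_contra h
  push_neg at h
  have hx0 : (x : Eu n) = 0 := PiLp.ext h
  have hn : ‖(x : Eu n)‖ = 1 := mem_sphere_zero_iff_norm.mp x.2
  rw [hx0] at hn
  simp at hn

lemma ver_injective : Function.Injective (ver (n := n)) := by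
  intro q q' h
  obtain ⟨x, rfl⟩ := pr_surjective q
  obtain ⟨y, rfl⟩ := pr_surjective q'
  have hv : verf x = verf y := h
  obtain ⟨i₀, hi₀⟩ := exists_coord_ne_zero x
  have hsq : (x : Eu n) i₀ * (x : Eu n) i₀ = (y : Eu n) i₀ * (y : Eu n) i₀ := by
    have := congrFun (congrFun hv i₀) i₀; exact this
  have hy₀ : (y : Eu n) i₀ = (x : Eu n) i₀ ∨ (y : Eu n) i₀ = -((x : Eu n) i₀) := by
    rcases (mul_self_eq_mul_self_iff (a := (x : Eu n) i₀) (b := (y : Eu n) i₀)).mp hsq with h' | h'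
    · exact Or.inl h'.symm
    · exact Or.inr (by rw [h']; ring)
  rcases hy₀ with h' | h'
  · apply Quotient.sound
    left
    refine PiLp.ext (fun i => ?_)
    have := congrFun (congrFun hv i) i₀
    simp only [verf] at this
    rw [h'] at this
    exact mul_right_cancel₀ hi₀ this
  · apply Quotient.sound
    right
    refine PiLp.ext (fun i => ?_)
    have := congrFun (congrFun hv i) i₀
    simp only [verf] at this
    rw [h'] at this
    have : (x : Eu n) i * (x : Eu n) i₀ = (-((y : Eu n) i)) * (x : Eu n) i₀ := by
      rw [this]; ring
    have := mul_right_cancel₀ hi₀ this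
    show (x : Eu n) i = (-(y : Eu n)) i
    rw [this]; rfl

instance : T2Space (Pr n) := by
  constructor
  intro q q' hqq'
  exact separated_by_continuous continuous_ver (fun h => hqq' (ver_injective h))

end KrHs
namespace KrHs
open RealInnerProductSpace
variable {n : ℕ}

/-- Choice of the lift of `q` having positive inner product with `y`, when one exists. -/
def slift (y : ↥(Sp n)) (q : Pr n) : ↥(Sp n) :=
  if h : ∃ z : ↥(Sp n), pr z = q ∧ 0 < ⟪(y : Eu n), (z : Eu n)⟫ then h.choose else y

lemma slift_spec {y : ↥(Sp n)} {q : Pr n}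
    (h : ∃ z : ↥(Sp n), pr z = q ∧ 0 < ⟪(y : Eu n), (z : Eu n)⟫) :
    pr (slift y q) = q ∧ 0 < ⟪(y : Eu n), ((slift y q : ↥(Sp n)) : Eu n)⟫ := by
  rw [slift, dif_pos h]
  exact h.choose_spec

lemma inner_self_sphere (z : ↥(Sp n)) : ⟪(z : Eu n), (z : Eu n)⟫ = 1 := by
  rw [real_inner_self_eq_norm_sq]
  have : ‖(z : Eu n)‖ = 1 := mem_sphere_zero_iff_norm.mp z.2
  rw [this]; norm_num

lemma slift_unique {y z : ↥(Sp n)} {q : Pr n} (h1 : pr z = q)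
    (h2 : 0 < ⟪(y : Eu n), (z : Eu n)⟫) : slift y q = z := by
  have h : ∃ z : ↥(Sp n), pr z = q ∧ 0 < ⟪(y : Eu n), (z : Eu n)⟫ := ⟨z, h1, h2⟩
  obtain ⟨hq, hpos⟩ := slift_spec h
  rcases pr_exact (hq.trans h1.symm) with h' | h'
  · exact h'
  · exfalso
    rw [h'] at hpos
    simp only [negS_coe, inner_neg_right] at hpos
    linarith
lemma slift_continuousAt (z₀ : ↥(Sp n)) {q₁ : Pr n}
    (h : ∃ z : ↥(Sp n), pr z = q₁ ∧ 0 < ⟪(z₀ : Eu n), (z : Eu n)⟫) :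
    ContinuousAt (slift z₀) q₁ := by
  obtain ⟨hq₁, hpos₁⟩ := slift_spec h
  set z₁ := slift z₀ q₁ with hz₁
  rw [ContinuousAt, _root_.tendsto_nhds]
  intro W hW hz₁W
  have hU : IsOpen {z : ↥(Sp n) | 0 < ⟪(z₀ : Eu n), (z : Eu n)⟫} := by
    have : Continuous fun z : ↥(Sp n) => ⟪(z₀ : Eu n), (z : Eu n)⟫ :=
      Continuous.inner continuous_const continuous_subtype_val
    exact isOpen_lt continuous_const this
  have hV : IsOpen (pr '' ({z : ↥(Sp n) | 0 < ⟪(z₀ : Eu n), (z : Eu n)⟫} ∩ W)) :=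
    isOpenMap_pr _ (hU.inter hW)
  have hmem : q₁ ∈ pr '' ({z : ↥(Sp n) | 0 < ⟪(z₀ : Eu n), (z : Eu n)⟫} ∩ W) :=
    ⟨z₁, ⟨hpos₁, hz₁W⟩, hq₁⟩
  filter_upwards [hV.mem_nhds hmem] with q hq
  obtain ⟨z, ⟨hzpos, hzW⟩, rfl⟩ := hq
  show slift z₀ (pr z) ∈ W
  rwa [slift_unique (q := pr z) rfl hzpos]

lemma exists_step {C' : Set (Pr n)} (hC : IsClosed C') (K : ↥C' × ↥I → Pr n)
    (hK : Continuous K) :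
    ∃ δ : ℝ, 0 < δ ∧ ∀ (x : ↥C') (t t' : ↥I), |(t : ℝ) - (t' : ℝ)| < δ →
      ∀ y z : ↥(Sp n), pr y = K (x, t) → pr z = K (x, t') →
        ⟪(y : Eu n), (z : Eu n)⟫ ≠ 0 := by
  haveI : CompactSpace ↥C' := isCompact_iff_compactSpace.mp hC.isCompact
  set X := (↥C' × ↥I × ↥I) × (↥(Sp n) × ↥(Sp n))
  set Big : Set X := {p | pr p.2.1 = K (p.1.1, p.1.2.1) ∧ pr p.2.2 = K (p.1.1, p.1.2.2) ∧
    ⟪(p.2.1 : Eu n), (p.2.2 : Eu n)⟫ = 0} with hBig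
  have hBigClosed : IsClosed Big := by
    apply IsClosed.inter
    · exact isClosed_eq (continuous_pr.comp (continuous_fst.comp continuous_snd))
        (hK.comp (by fun_prop))
    · apply IsClosed.inter
      · exact isClosed_eq (continuous_pr.comp (continuous_snd.comp continuous_snd))
          (hK.comp (by fun_prop))
      · exact isClosed_eq (Continuous.inner
          (continuous_subtype_val.comp (continuous_fst.comp continuous_snd))
          (continuous_subtype_val.comp (continuous_snd.comp continuous_snd))) continuous_const
  have hBigCompact : IsCompact Big := hBigClosed.isCompact
  by_cases hne : Big.Nonempty
  · obtain ⟨p₀, hp₀, hmin⟩ := hBigCompact.exists_isMinOn hne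
      (Continuous.continuousOn (by fun_prop :
        Continuous fun p : X => |(p.1.2.1 : ℝ) - (p.1.2.2 : ℝ)|))
    set δ := |(p₀.1.2.1 : ℝ) - (p₀.1.2.2 : ℝ)| with hδ
    have hδpos : 0 < δ := by
      by_contra hzero
      push_neg at hzero
      have : δ = 0 := le_antisymm hzero (abs_nonneg _)
      have heq : (p₀.1.2.1 : ℝ) = (p₀.1.2.2 : ℝ) := by
        have := abs_eq_zero.mp this
        linarith
      have ht : p₀.1.2.1 = p₀.1.2.2 := Subtype.ext heq
      obtain ⟨h1, h2, h3⟩ := hp₀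
      rw [ht] at h1
      rcases pr_exact (h1.trans h2.symm) with h' | h'
      · rw [h'] at h3
        rw [inner_self_sphere] at h3
        norm_num at h3
      · rw [h'] at h3
        simp only [negS_coe, inner_neg_left] at h3
        rw [inner_self_sphere] at h3
        norm_num at h3
    refine ⟨δ, hδpos, ?_⟩
    intro x t t' hlt y z hy hz hinner
    have : ((x, t, t'), (y, z)) ∈ Big := ⟨hy, hz, hinner⟩
    have := hmin this
    simp only [hδ] at this hlt
    exact absurd (lt_of_le_of_lt this hlt) (lt_irrefl _)
  · refine ⟨1, one_pos, ?_⟩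
    intro x t t' _ y z hy hz hinner
    exact hne ⟨((x, t, t'), (y, z)), hy, hz, hinner⟩

end KrHs
namespace KrHs
open RealInnerProductSpace
variable {n : ℕ}

lemma exists_section_of_contractibleIn {C' : Set (Pr n)} (hC : IsClosed C')
    (hc : ContractibleIn C') :
    ∃ ℓ : ↥C' → ↥(Sp n), Continuous ℓ ∧ ∀ w : ↥C', pr (ℓ w) = (w : Pr n) := by
  obtain ⟨x₀, H, H0, H1⟩ := hc
  set K : ↥C' × ↥I → Pr n := fun p => H (p.1, unitInterval.symm p.2) with hKdef
  have hK : Continuous K := H.continuous.comp (by fun_prop)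
  have hK0 : ∀ x : ↥C', K (x, 0) = x₀ := by
    intro x; simp only [hKdef, unitInterval.symm_zero]; exact H1 x
  have hK1 : ∀ x : ↥C', K (x, 1) = (x : Pr n) := by
    intro x; simp only [hKdef, unitInterval.symm_one]; exact H0 x
  obtain ⟨δ, hδpos, hδ⟩ := exists_step hC K hK
  obtain ⟨N, hN⟩ := exists_nat_one_div_lt hδpos
  set M : ℕ := N + 1 with hM
  have hMpos : (0 : ℝ) < M := by positivity
  have hstep : (1 : ℝ) / M < δ := by rwa [hM, Nat.cast_add, Nat.cast_one]
  have τmem : ∀ j : ℕ, j ≤ M → (j : ℝ) / M ∈ I := by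
    intro j hj
    constructor
    · positivity
    · rw [div_le_one hMpos]
      exact_mod_cast hj
  have main : ∀ j : ℕ, ∀ hj : j ≤ M, ∃ u : ↥C' → ↥(Sp n), Continuous u ∧
      ∀ x : ↥C', pr (u x) = K (x, ⟨(j : ℝ) / M, τmem j hj⟩) := by
    intro j
    induction j with
    | zero =>
      intro hj
      obtain ⟨x₁, hx₁⟩ := pr_surjective x₀
      refine ⟨fun _ => x₁, continuous_const, ?_⟩
      intro x
      have : (⟨(0 : ℕ) / M, τmem 0 hj⟩ : ↥I) = (0 : ↥I) := by
        apply Subtype.ext; simp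
      rw [this, hK0, hx₁]
    | succ j ih =>
      intro hj
      have hjM : j ≤ M := Nat.le_of_succ_le hj
      obtain ⟨u, hu, hupr⟩ := ih hjM
      set t : ↥I := ⟨(j : ℝ) / M, τmem j hjM⟩ with ht
      set t' : ↥I := ⟨((j + 1 : ℕ) : ℝ) / M, τmem (j+1) hj⟩ with ht'
      have htt' : |(t : ℝ) - (t' : ℝ)| < δ := by
        have : (t : ℝ) - (t' : ℝ) = -(1 / M) := by
          simp only [ht, ht']
          push_cast
          field_simp
          ring
        rw [this, abs_neg, abs_of_pos (by positivity)]
        exact hstep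
      have hE : ∀ x : ↥C', ∃ z : ↥(Sp n), pr z = K (x, t') ∧
          0 < ⟪((u x : ↥(Sp n)) : Eu n), (z : Eu n)⟫ := by
        intro x
        obtain ⟨z₀, hz₀⟩ := pr_surjective (K (x, t'))
        have hne : ⟪((u x : ↥(Sp n)) : Eu n), (z₀ : Eu n)⟫ ≠ 0 :=
          hδ x t t' htt' (u x) z₀ (hupr x) hz₀
        rcases lt_or_gt_of_ne hne with hlt | hgt
        · refine ⟨negS z₀, (pr_negS z₀).trans hz₀, ?_⟩
          simp only [negS_coe, inner_neg_right]
          linarith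
        · exact ⟨z₀, hz₀, hgt⟩
      set u' : ↥C' → ↥(Sp n) := fun x => slift (u x) (K (x, t')) with hu'
      have hu'pr : ∀ x : ↥C', pr (u' x) = K (x, t') := fun x => (slift_spec (hE x)).1
      refine ⟨u', ?_, hu'pr⟩
      rw [continuous_iff_continuousAt]
      intro a
      set z₀ := slift (u a) (K (a, t')) with hz₀def
      obtain ⟨hz₀pr, hz₀pos⟩ := slift_spec (hE a)
      set w : ↥C' → ↥(Sp n) := fun x => slift z₀ (K (x, t')) with hwdef
      have hKt : Continuous fun x : ↥C' => K (x, t') := hK.comp (by fun_prop)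
      have hwCA : ContinuousAt w a := by
        have h1 : ContinuousAt (slift z₀) (K (a, t')) :=
          slift_continuousAt z₀ ⟨z₀, hz₀pr, by rw [inner_self_sphere]; norm_num⟩
        exact ContinuousAt.comp (x := a) (f := fun x : ↥C' => K (x, t')) h1 hKt.continuousAt
      have hwa : w a = z₀ :=
        slift_unique hz₀pr (by rw [inner_self_sphere]; norm_num)
      -- eventually, `K (x, t')` has a lift close to `z₀`
      have hV : IsOpen (pr '' {z : ↥(Sp n) | 0 < ⟪(z₀ : Eu n), (z : Eu n)⟫}) := by
    

        apply isOpenMap_pr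
        exact isOpen_lt continuous_const (Continuous.inner continuous_const continuous_subtype_val)
      have hmemV : K (a, t') ∈ pr '' {z : ↥(Sp n) | 0 < ⟪(z₀ : Eu n), (z : Eu n)⟫} :=
        ⟨z₀, by rw [Set.mem_setOf_eq, inner_self_sphere]; norm_num, hz₀pr⟩
      have hev1 : ∀ᶠ x in nhds a, K (x, t') ∈
          pr '' {z : ↥(Sp n) | 0 < ⟪(z₀ : Eu n), (z : Eu n)⟫} :=
        hKt.continuousAt (hV.mem_nhds hmemV)
      have hwspec : ∀ᶠ x in nhds a, pr (w x) = K (x, t') ∧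
          0 < ⟪(z₀ : Eu n), ((w x : ↥(Sp n)) : Eu n)⟫ := by
        filter_upwards [hev1] with x hx
        obtain ⟨z, hz, hzeq⟩ := hx
        exact slift_spec ⟨z, hzeq, hz⟩
      have hev2 : ∀ᶠ x in nhds a, 0 < ⟪((u x : ↥(Sp n)) : Eu n), ((w x : ↥(Sp n)) : Eu n)⟫ := by
        have hcont : ContinuousAt (fun x : ↥C' =>
            ⟪((u x : ↥(Sp n)) : Eu n), ((w x : ↥(Sp n)) : Eu n)⟫) a := by
          apply ContinuousAt.inner
          · exact (continuous_subtype_val.comp hu).continuousAt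
          · exact (continuous_subtype_val.continuousAt).comp hwCA
        have hval : 0 < ⟪((u a : ↥(Sp n)) : Eu n), ((w a : ↥(Sp n)) : Eu n)⟫ := by
          rw [hwa]; exact hz₀pos
        exact hcont (Ioi_mem_nhds hval)
      have heveq : ∀ᶠ x in nhds a, u' x = w x := by
        filter_upwards [hwspec, hev2] with x hx1 hx2
        exact slift_unique hx1.1 hx2
      exact ContinuousAt.congr hwCA (Filter.EventuallyEq.symm heveq)
  obtain ⟨u, hu, hupr⟩ := main M le_rfl
  refine ⟨u, hu, ?_⟩
  intro w
  have : (⟨(M : ℝ) / M, τmem M le_rfl⟩ : ↥I) = (1 : ↥I) := by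
    apply Subtype.ext
    show (M : ℝ) / M = 1
    field_simp
  rw [hupr w, this, hK1]

end KrHs
namespace KrHs
open RealInnerProductSpace
variable {n : ℕ}

lemma negS_ne (y : ↥(Sp n)) : y ≠ negS y := by
  intro h
  have hc : (y : Eu n) = -(y : Eu n) := congrArg Subtype.val h
  have h0 : (y : Eu n) = 0 := by
    have := eq_neg_iff_add_eq_zero.mp hc
    have h2 : (2 : ℝ) • (y : Eu n) = 0 := by
      rw [two_smul]; exact this
    simpa using (smul_eq_zero.mp h2).resolve_left (by norm_num)
  have := mem_sphere_zero_iff_norm.mp y.2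
  rw [h0] at this
  simp at this

lemma hasOddMap_of_cover {A : Set (Eu n)} (hsub : A ⊆ Sp n) (hcl : IsClosed A)
    (hsym : A = -A) {m : ℕ} (C : Fin m → Set (Pr n))
    (hCcl : ∀ i, IsClosed (C i)) (hCc : ∀ i, ContractibleIn (C i))
    (hcov : pr '' {x : ↥(Sp n) | (x : Eu n) ∈ A} ⊆ ⋃ i, C i) :
    HasOddMap A m := by
  choose ell hellc hellpr using fun i => exists_section_of_contractibleIn (hCcl i) (hCc i)
  set Ei : Fin m → Set ↥(Sp n) := fun i => pr ⁻¹' (C i) with hEi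
  have hEicl : ∀ i, IsClosed (Ei i) := fun i => (hCcl i).preimage continuous_pr
  set sfun : ∀ i : Fin m, ↥(Ei i) → ℝ := fun i z =>
    if (z : ↥(Sp n)) = ell i ⟨pr (z : ↥(Sp n)), z.2⟩ then (1 : ℝ) else -1 with hsfun
  have hsP : ∀ i (z : ↥(Ei i)), (z : ↥(Sp n)) = ell i ⟨pr (z : ↥(Sp n)), z.2⟩ ∨
      (z : ↥(Sp n)) = negS (ell i ⟨pr (z : ↥(Sp n)), z.2⟩) := by
    intro i z
    rcases pr_exact (hellpr i ⟨pr (z : ↥(Sp n)), z.2⟩) with h | h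
    · exact Or.inl h.symm
    · right
      rw [h, negS_negS]
  -- the canonical lift agrees for `z` and `negS z`
  have hLeq : ∀ i (z : ↥(Sp n)) (hz : z ∈ Ei i) (hz' : negS z ∈ Ei i),
      ell i ⟨pr (negS z), hz'⟩ = ell i ⟨pr z, hz⟩ := by
    intro i z hz hz'
    congr 1
    exact Subtype.ext (pr_negS z)
  have hodd : ∀ i (z : ↥(Sp n)) (hz : z ∈ Ei i) (hz' : negS z ∈ Ei i),
      sfun i ⟨negS z, hz'⟩ = - sfun i ⟨z, hz⟩ := by
    intro i z hz hz'
    by_cases h : z = ell i ⟨pr z, hz⟩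
    · have h2 : ¬ (negS z = ell i ⟨pr (negS z), hz'⟩) := by
        rw [hLeq i z hz hz', ← h]
        intro hcon
        exact negS_ne z hcon.symm
      simp only [hsfun, if_neg h2, if_pos h]
      try norm_num
    · have hz2 : z = negS (ell i ⟨pr z, hz⟩) := (hsP i ⟨z, hz⟩).resolve_left h
      have h2 : negS z = ell i ⟨pr (negS z), hz'⟩ := by
        rw [hLeq i z hz hz']
        conv_lhs => rw [hz2]
        rw [negS_negS]
      simp only [hsfun, if_pos h2, if_neg h]
      try norm_num
  have hscont : ∀ i, Continuous (sfun i) := by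
    intro i
    have hmapc : Continuous fun z : ↥(Ei i) => ell i ⟨pr (z : ↥(Sp n)), z.2⟩ := by
      apply (hellc i).comp
      exact Continuous.subtype_mk (continuous_pr.comp continuous_subtype_val) _
    set P := {z : ↥(Ei i) | (z : ↥(Sp n)) = ell i ⟨pr (z : ↥(Sp n)), z.2⟩} with hPdef
    set N := {z : ↥(Ei i) | (z : ↥(Sp n)) = negS (ell i ⟨pr (z : ↥(Sp n)), z.2⟩)} with hNdef
    have hPcl : IsClosed P := isClosed_eq continuous_subtype_val hmapc
    have hNcl : IsClosed N := by
      apply isClosed_eq continuous_subtype_val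
      exact (Continuous.subtype_mk (continuous_subtype_val.neg.comp hmapc) _)
    have hPN : P = Nᶜ := by
      ext z
      simp only [hPdef, hNdef, Set.mem_setOf_eq, Set.mem_compl_iff]
      constructor
      · intro h hcon
        rw [← h] at hcon
        exact negS_ne _ hcon
      · intro h
        exact (hsP i z).resolve_right h
    have hPopen : IsOpen P := by rw [hPN]; exact hNcl.isOpen_compl
    have hNopen : IsOpen N := by
      have : N = Pᶜ := by rw [hPN, compl_compl]
      rw [this]; exact hPcl.isOpen_compl
    rw [continuous_iff_continuousAt]
    intro z
    by_cases hz : z ∈ P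
    · have hev : ∀ᶠ w in nhds z, sfun i w = 1 := by
        filter_upwards [hPopen.mem_nhds hz] with w hw
        have hw' : (w : ↥(Sp n)) = ell i ⟨pr (w : ↥(Sp n)), w.2⟩ := hw
        exact if_pos hw'
      exact ContinuousAt.congr continuousAt_const (Filter.EventuallyEq.symm hev)
    · have hz' : z ∈ N := by
        rw [hPN] at hz
        simpa using hz
      have hev : ∀ᶠ w in nhds z, sfun i w = -1 := by
        filter_upwards [hNopen.mem_nhds hz'] with w hw
        have hwP : w ∉ P := by
          rw [hPN]
          simpa using hw
        have hw' : ¬ ((w : ↥(Sp n)) = ell i ⟨pr (w : ↥(Sp n)), w.2⟩) := hwP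
        exact if_neg hw'
      exact ContinuousAt.congr continuousAt_const (Filter.EventuallyEq.symm hev)
  choose g hg using fun i =>
    ContinuousMap.exists_restrict_eq (Y := ℝ) (hEicl i) ⟨sfun i, hscont i⟩
  have hgval : ∀ i (z : ↥(Sp n)) (hz : z ∈ Ei i), g i z = sfun i ⟨z, hz⟩ := by
    intro i z hz
    have := DFunLike.congr_fun (hg i) ⟨z, hz⟩
    exact this
  -- assemble the odd map
  set xa : ↥A → ↥(Sp n) := fun a => ⟨(a : Eu n), hsub a.2⟩ with hxa
  have hxac : Continuous xa := Continuous.subtype_mk continuous_subtype_val _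
  refine ⟨fun a i => (g i (xa a) - g i (negS (xa a))) / 2, ?_, ?_, ?_⟩
  · apply continuous_pi
    intro i
    apply Continuous.div_const
    apply Continuous.sub
    · exact (g i).continuous.comp hxac
    · exact (g i).continuous.comp ((Continuous.subtype_mk (continuous_subtype_val.neg.comp hxac) _))
  · -- nonvanishing
    intro a
    have hmem : pr (xa a) ∈ ⋃ i, C i := hcov ⟨xa a, a.2, rfl⟩
    obtain ⟨i, hi⟩ := Set.mem_iUnion.mp hmem
    have hz : xa a ∈ Ei i := hi
    have hz' : negS (xa a) ∈ Ei i := by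
      show pr (negS (xa a)) ∈ C i
      rw [pr_negS]; exact hi
    intro hcon
    have hcoord : ((g i) (xa a) - (g i) (negS (xa a))) / 2 = 0 := by
      simpa using congrFun hcon i
    rw [hgval i _ hz, hgval i _ hz', hodd i (xa a) hz hz'] at hcoord
    have : sfun i ⟨xa a, hz⟩ = 0 := by linarith
    by_cases hcase : (xa a : ↥(Sp n)).1 = ((ell i ⟨pr (xa a), hz⟩ : ↥(Sp n)) : Eu n)
    · rw [hsfun] at this
      simp only [if_pos (Subtype.ext hcase)] at this
      norm_num at this
    · rw [hsfun] at this
      have : (if (xa a : ↥(Sp n)) = ell i ⟨pr (xa a), hz⟩ then (1:ℝ) else -1) = 0 := this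
      rw [if_neg (fun hc => hcase (congrArg Subtype.val hc))] at this
      norm_num at this
  · -- oddness
    intro x hx
    funext i
    have hxx : xa ⟨-(x : Eu n), hx⟩ = negS (xa x) := Subtype.ext rfl
    show (g i (xa ⟨-(x : Eu n), hx⟩) - g i (negS (xa ⟨-(x : Eu n), hx⟩))) / 2 =
      (-(fun i => (g i (xa x) - g i (negS (xa x))) / 2)) i
    rw [hxx, negS_negS]
    simp only [Pi.neg_apply]
    ring

end KrHs
namespace KrHs
variable {n : ℕ}

instance : Nonempty ↥(Sp n) :=
  ⟨⟨EuclideanSpace.single 0 1, by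
    rw [show Sp n = Metric.sphere (0 : Eu n) 1 from rfl, mem_sphere_zero_iff_norm,
      EuclideanSpace.norm_single]
    norm_num⟩⟩

instance : Nonempty (Pr n) := ⟨pr (Classical.arbitrary _)⟩

lemma contractibleIn_empty : ContractibleIn (∅ : Set (Pr n)) := by
  refine ⟨Classical.arbitrary _, ⟨fun _ => Classical.arbitrary _, continuous_const⟩, ?_, ?_⟩
  · intro x; exact absurd x.2 (Set.notMem_empty _)
  · intro x; exact absurd x.2 (Set.notMem_empty _)

lemma pr_preimage_image (U : Set ↥(Sp n)) : pr ⁻¹' (pr '' U) = U ∪ negS '' U := by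
  ext x
  constructor
  · rintro ⟨y, hy, hxy⟩
    rcases pr_exact hxy.symm with rfl | rfl
    · exact Or.inl hy
    · exact Or.inr ⟨y, hy, rfl⟩
  · rintro (hx | ⟨y, hy, rfl⟩)
    · exact ⟨x, hx, rfl⟩
    · exact ⟨y, hy, (pr_negS y).symm⟩

lemma negS_image_eq_preimage (U : Set ↥(Sp n)) : negS '' U = negS ⁻¹' U := by
  ext x
  constructor
  · rintro ⟨y, hy, rfl⟩; simpa [negS_negS] using hy
  · intro hx; exact ⟨negS x, hx, negS_negS x⟩

lemma continuous_negS : Continuous (negS (n := n)) :=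
  Continuous.subtype_mk continuous_subtype_val.neg _

/-- A compact antipode-free subset of the sphere projects to a closed set that is
contractible in projective space. -/
lemma contractibleIn_pr_image {Cp : Set ↥(Sp n)} (hcl : IsClosed Cp)
    (hfree : ∀ y ∈ Cp, negS y ∉ Cp) : ContractibleIn (pr '' Cp) := by
  rcases Set.eq_empty_or_nonempty Cp with rfl | ⟨z, hz⟩
  · rw [Set.image_empty]; exact contractibleIn_empty
  haveI : CompactSpace ↥Cp := isCompact_iff_compactSpace.mp hcl.isCompact
  -- the homeomorphism between `Cp` and its projection
  set e : ↥Cp → ↥(pr '' Cp) := fun y => ⟨pr y.1, ⟨y.1, y.2, rfl⟩⟩ with he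
  have hebij : Function.Bijective e := by
    constructor
    · intro y y' hyy'
      have : pr y.1 = pr y'.1 := congrArg Subtype.val hyy'
      rcases pr_exact this with h | h
      · exact Subtype.ext h
      · exfalso
        have : negS y'.1 ∈ Cp := by rw [← h]; exact y.2
        exact hfree y'.1 y'.2 this
    · rintro ⟨a, y, hy, rfl⟩
      exact ⟨⟨y, hy⟩, rfl⟩
  have hecont : Continuous e := Continuous.subtype_mk (continuous_pr.comp continuous_subtype_val) _
  set eh : ↥Cp ≃ₜ ↥(pr '' Cp) :=
    Continuous.homeoOfEquivCompactToT2 (f := Equiv.ofBijective e hebij) hecont with heh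
  set ψ : ↥(pr '' Cp) → ↥Cp := fun w => eh.symm w with hψ
  have hψpr : ∀ w : ↥(pr '' Cp), pr (ψ w).1 = (w : Pr n) := by
    intro w
    have : e (ψ w) = w := eh.apply_symm_apply w
    exact congrArg Subtype.val this
  -- the contraction towards `z`
  have hnz : ∀ (y : ↥(Sp n)), y ∈ Cp → ∀ t : ℝ, t ∈ I →
      (1 - t) • (y : Eu n) + t • (z : Eu n) ≠ 0 := by
    intro y hy t ht hcon
    have h1 : (1 - t) • (y : Eu n) = -(t • (z : Eu n)) :=
      eq_neg_of_add_eq_zero_left hcon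
    have hny : ‖(y : Eu n)‖ = 1 := mem_sphere_zero_iff_norm.mp y.2
    have hnz' : ‖(z : Eu n)‖ = 1 := mem_sphere_zero_iff_norm.mp z.2
    have hnorm : |1 - t| = |t| := by
      have := congrArg norm h1
      rw [norm_smul, norm_neg, norm_smul, hny, hnz'] at this
      simpa [Real.norm_eq_abs] using this
    have ht0 : 0 ≤ t := ht.1
    have ht1 : t ≤ 1 := ht.2
    have hteq : t = 1/2 := by
      rw [abs_of_nonneg (by linarith), abs_of_nonneg ht0] at hnorm
      linarith
    rw [hteq, show (1:ℝ) - 1/2 = 1/2 by norm_num] at h1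
    have : (y : Eu n) = -(z : Eu n) := by
      have h2 : ((1:ℝ)/2) • (y : Eu n) = ((1:ℝ)/2) • (-(z : Eu n)) := by
        rw [smul_neg]; exact h1
      exact smul_right_injective (Eu n) (by norm_num : ((1:ℝ)/2 : ℝ) ≠ 0) h2
    have : y = negS z := Subtype.ext this
    rw [this] at hy
    exact hfree z hz hy
  set v : ↥(pr '' Cp) × ↥I → Eu n :=
    fun p => (1 - (p.2 : ℝ)) • ((ψ p.1).1 : Eu n) + (p.2 : ℝ) • (z : Eu n) with hv
  have hvne : ∀ p, v p ≠ 0 := fun p => hnz (ψ p.1).1 (ψ p.1).2 p.2 p.2.2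
  have hvcont : Continuous v := by
    apply Continuous.add
    · apply Continuous.fun_smul
      · exact (continuous_const.sub (continuous_subtype_val.comp continuous_snd))
      · exact continuous_subtype_val.comp
          (continuous_subtype_val.comp (eh.symm.continuous.comp continuous_fst))
    · exact (continuous_subtype_val.comp continuous_snd).smul continuous_const
  set nm : ↥(pr '' Cp) × ↥I → ↥(Sp n) := fun p =>
    ⟨‖v p‖⁻¹ • v p, by
      rw [show Sp n = Metric.sphere (0 : Eu n) 1 from rfl, mem_sphere_zero_iff_norm,
        norm_smul, norm_inv, norm_norm]
      exact inv_mul_cancel₀ (norm_ne_zero_iff.mpr (hvne p))⟩ with hnm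
  have hnmcont : Continuous nm := by
    apply Continuous.subtype_mk
    exact ((hvcont.norm.inv₀ fun p => norm_ne_zero_iff.mpr (hvne p)).smul hvcont)
  refine ⟨pr z, ⟨fun p => pr (nm p), continuous_pr.comp hnmcont⟩, ?_, ?_⟩
  · intro w
    show pr (nm (w, 0)) = ↑w
    have h0 : ((0 : ↥I) : ℝ) = 0 := rfl
    have : nm (w, 0) = (ψ w).1 := by
      apply Subtype.ext
      show ‖v (w, 0)‖⁻¹ • v (w, 0) = ((ψ w).1 : Eu n)
      have hv0 : v (w, 0) = ((ψ w).1 : Eu n) := by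
        simp only [hv, h0]
        norm_num
      rw [hv0, mem_sphere_zero_iff_norm.mp (ψ w).1.2]
      norm_num
    rw [this, hψpr]
  · intro w
    show pr (nm (w, 1)) = pr z
    have h1 : ((1 : ↥I) : ℝ) = 1 := rfl
    have : nm (w, 1) = z := by
      apply Subtype.ext
      show ‖v (w, 1)‖⁻¹ • v (w, 1) = (z : Eu n)
      have hv1 : v (w, 1) = (z : Eu n) := by
        simp only [hv, h1]
        norm_num
      rw [hv1, mem_sphere_zero_iff_norm.mp z.2]
      norm_num
    rw [this]

end KrHs
namespace KrHs
variable {n : ℕ}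

lemma cover_of_oddMap {AS : Set ↥(Sp n)} (hAScl : IsClosed AS)
    (hASsym : ∀ x ∈ AS, negS x ∈ AS) {m : ℕ}
    (hodd : HasOddMap (Subtype.val '' AS : Set (Eu n)) m) :
    ∃ C : Fin m → Set (Pr n), (∀ i, IsClosed (C i)) ∧ (∀ i, ContractibleIn (C i)) ∧
      pr '' AS ⊆ ⋃ i, C i := by
  obtain ⟨h, hc, hnzero, hoddp⟩ := hodd
  haveI : CompactSpace ↥AS := isCompact_iff_compactSpace.mp hAScl.isCompact
  set inc : ↥AS → ↥(Subtype.val '' AS : Set (Eu n)) :=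
    fun x => ⟨((x : ↥(Sp n)) : Eu n), ⟨(x : ↥(Sp n)), x.2, rfl⟩⟩ with hinc
  have hinccont : Continuous inc :=
    Continuous.subtype_mk (continuous_subtype_val.comp continuous_subtype_val) _
  set h₂ : ↥AS → Fin m → ℝ := fun x => h (inc x) with hh₂
  have h₂cont : Continuous h₂ := hc.comp hinccont
  have h₂ne : ∀ x, h₂ x ≠ 0 := fun x => hnzero (inc x)
  have h₂odd : ∀ (x : ↥AS) (hx : negS (x : ↥(Sp n)) ∈ AS),
      h₂ ⟨negS (x : ↥(Sp n)), hx⟩ = -h₂ x := by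
    intro x hx
    have hmem : -(((x : ↥(Sp n)) : Eu n)) ∈ (Subtype.val '' AS : Set (Eu n)) :=
      ⟨negS (x : ↥(Sp n)), hx, rfl⟩
    have := hoddp (inc x) hmem
    calc h₂ ⟨negS (x : ↥(Sp n)), hx⟩
        = h ⟨-(((x : ↥(Sp n)) : Eu n)), hmem⟩ := by
          apply congrArg h
          apply Subtype.ext
          rfl
      _ = -h (inc x) := this
  -- the half-spaces
  set D : Fin m → Set ↥AS := fun i => {x : ↥AS | ‖h₂ x‖ / 2 ≤ h₂ x i} with hD
  have hDcl : ∀ i, IsClosed (D i) := by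
    intro i
    apply isClosed_le
    · exact (h₂cont.norm).div_const 2
    · exact (continuous_apply i).comp h₂cont
  set Cp : Fin m → Set ↥(Sp n) := fun i => Subtype.val '' D i with hCp
  have hCpcl : ∀ i, IsClosed (Cp i) := by
    intro i
    have : IsCompact (Cp i) := (((hDcl i).isCompact).image continuous_subtype_val)
    exact this.isClosed
  have hfree : ∀ i, ∀ y ∈ Cp i, negS y ∉ Cp i := by
    intro i y hy hny
    obtain ⟨d, hd, hdval⟩ := hy
    obtain ⟨d', hd', hdval'⟩ := hny
    have hdpos : 0 < ‖h₂ d‖ := norm_pos_iff.mpr (h₂ne d)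
    have hmemneg : negS (d : ↥(Sp n)) ∈ AS := hASsym _ d.2
    have hd'eq : d' = ⟨negS (d : ↥(Sp n)), hmemneg⟩ := by
      apply Subtype.ext
      apply Subtype.ext
      show ((d' : ↥(Sp n)) : Eu n) = (negS (d : ↥(Sp n)) : Eu n)
      have e1 : ((d' : ↥(Sp n)) : Eu n) = -((y : ↥(Sp n)) : Eu n) := by rw [hdval']; rfl
      have e2 : ((d : ↥(Sp n)) : Eu n) = ((y : ↥(Sp n)) : Eu n) := by rw [hdval]
      rw [e1, negS_coe, e2]
    have h2d' : h₂ d' = -h₂ d := by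
      rw [hd'eq]
      exact h₂odd d _
    have hDd := hd
    have hDd' := hd'
    rw [hD, Set.mem_setOf_eq] at hDd hDd'
    rw [h2d'] at hDd'
    simp only [Pi.neg_apply, norm_neg] at hDd'
    linarith
  refine ⟨fun i => pr '' Cp i, ?_, ?_, ?_⟩
  · intro i
    rw [isClosed_pr_iff, pr_preimage_image, negS_image_eq_preimage]
    exact (hCpcl i).union ((hCpcl i).preimage continuous_negS)
  · intro i
    exact contractibleIn_pr_image (hCpcl i) (hfree i)
  · rintro a ⟨x, hx, rfl⟩
    set d : ↥AS := ⟨x, hx⟩ with hd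
    have hdpos : 0 < ‖h₂ d‖ := norm_pos_iff.mpr (h₂ne d)
    have : ∃ i, ‖h₂ d‖ / 2 ≤ |h₂ d i| := by
      by_contra hcon
      push_neg at hcon
      have : ‖h₂ d‖ ≤ ‖h₂ d‖ / 2 := by
        apply pi_norm_le_iff_of_nonneg (by positivity) |>.mpr
        intro i
        rw [Real.norm_eq_abs]
        exact le_of_lt (hcon i)
      linarith
    obtain ⟨i, hi⟩ := this
    rw [Set.mem_iUnion]
    refine ⟨i, ?_⟩
    rcases le_or_gt 0 (h₂ d i) with hpos | hneg
    · have : d ∈ D i := by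
        rw [hD, Set.mem_setOf_eq]
        rwa [abs_of_nonneg hpos] at hi
      exact ⟨x, ⟨d, this, rfl⟩, rfl⟩
    · set d' : ↥AS := ⟨negS x, hASsym x hx⟩ with hd'
      have h2d' : h₂ d' = -h₂ d := h₂odd d (hASsym x hx)
      have : d' ∈ D i := by
        rw [hD, Set.mem_setOf_eq, h2d']
        simp only [Pi.neg_apply, norm_neg]
        rwa [abs_of_neg hneg] at hi
      refine ⟨negS x, ⟨d', this, rfl⟩, pr_negS x⟩

end KrHs
namespace KrHs

lemma genus_le_of_hasOddMap {B : Type*} [NormedAddCommGroup B] [NormedSpace ℝ B]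
    {A : Set B} {m : ℕ} (h : HasOddMap A m) : genus A ≤ (m : ℕ∞) := by
  rw [genus]
  split_ifs with hA
  · exact zero_le
  · exact sInf_le ⟨m, rfl, h⟩

lemma exists_hasOddMap_of_genus_lt {B : Type*} [NormedAddCommGroup B] [NormedSpace ℝ B]
    {A : Set B} {k : ℕ} (hA : A ≠ ∅) (h : genus A < (k : ℕ∞)) :
    ∃ m : ℕ, m < k ∧ HasOddMap A m := by
  rw [genus, if_neg hA] at h
  obtain ⟨a, ⟨m, rfl, hm⟩, hlt⟩ := sInf_lt_iff.mp h
  exact ⟨m, Nat.cast_lt.mp hlt, hm⟩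

lemma catLS_le_of_cover {Φ : Type*} [TopologicalSpace Φ] {A : Set Φ} {m : ℕ}
    (C : Fin m → Set Φ) (hcl : ∀ i, IsClosed (C i)) (hc : ∀ i, ContractibleIn (C i))
    (hcov : A ⊆ ⋃ i, C i) : catLS A ≤ (m : ℕ∞) :=
  sInf_le ⟨m, rfl, C, hcl, hc, hcov⟩

lemma exists_cover_of_catLS_lt {Φ : Type*} [TopologicalSpace Φ] {A : Set Φ} {k : ℕ}
    (h : catLS A < (k : ℕ∞)) :
    ∃ m : ℕ, m < k ∧ ∃ C : Fin m → Set Φ, (∀ i, IsClosed (C i)) ∧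
      (∀ i, ContractibleIn (C i)) ∧ A ⊆ ⋃ i, C i := by
  rw [catLS] at h
  obtain ⟨a, ⟨m, rfl, hm⟩, hlt⟩ := sInf_lt_iff.mp h
  exact ⟨m, Nat.cast_lt.mp hlt, hm⟩

lemma catLS_empty_le {Φ : Type*} [TopologicalSpace Φ] : catLS (∅ : Set Φ) ≤ (0 : ℕ∞) := by
  apply catLS_le_of_cover (m := 0) Fin.elim0 (fun i => i.elim0) (fun i => i.elim0)
  simp

end KrHs
open KrHs in
/-- For a continuous function on `ℝP^n` the Krasnoselskii eigenvalues of the induced even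
function on `S^n` coincide with the category eigenvalues, for all `k ∈ {1, …, n+1}`. -/
theorem kr_eq_hs_rpn (n : ℕ)
    (f : Proj (EuclideanSpace ℝ (Fin (n + 1))) → ℝ) (hf : Continuous f)
    (F : EuclideanSpace ℝ (Fin (n + 1)) → ℝ)
    (hF : ∀ x (hx : x ∈ sphere (0 : EuclideanSpace ℝ (Fin (n + 1))) 1),
      F x = f (Quotient.mk (projSetoid (EuclideanSpace ℝ (Fin (n + 1)))) ⟨x, hx⟩)) :
    ∀ k : ℕ, 1 ≤ k → k ≤ n + 1 → kr F k = hs f k := by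
  intro k hk1 _
  have hFs : ∀ xs : ↥(Sp n), F (xs : Eu n) = f (pr xs) := fun xs => hF _ xs.2
  apply le_antisymm
  · -- kr ≤ hs
    rw [kr, hs]
    apply le_iInf₂
    intro A' hA'
    obtain ⟨hA'cl, hA'cat⟩ := hA'
    set AS : Set ↥(Sp n) := pr ⁻¹' A' with hAS
    set AE : Set (Eu n) := Subtype.val '' AS with hAE
    have hAScl : IsClosed AS := hA'cl.preimage continuous_pr
    have hASsym : ∀ x ∈ AS, negS x ∈ AS := by
      intro x hx
      show pr (negS x) ∈ A'
      rwa [pr_negS]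
    have hmem : AE ∈ {A : Set (Eu n) | A ⊆ sphere (0 : Eu n) 1 ∧ IsClosed A ∧ A = -A ∧
        (k : ℕ∞) ≤ genus A} := by
      refine ⟨?_, ?_, ?_, ?_⟩
      · rintro x ⟨xs, _, rfl⟩; exact xs.2
      · exact ((hAScl.isCompact).image continuous_subtype_val).isClosed
      · ext x
        constructor
        · rintro ⟨xs, hxs, rfl⟩
          rw [Set.mem_neg]
          exact ⟨negS xs, hASsym xs hxs, rfl⟩
        · intro hx
          rw [Set.mem_neg] at hx
          obtain ⟨xs, hxs, hval⟩ := hx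
          refine ⟨negS xs, hASsym xs hxs, ?_⟩
          rw [negS_coe, hval, neg_neg]
      · by_contra hcon
        push_neg at hcon
        rcases Set.eq_empty_or_nonempty AE with hAEe | hAEne
        · have hASempty : AS = ∅ := by
            rw [hAE, Set.image_eq_empty] at hAEe; exact hAEe
          have hA'empty : A' = ∅ := by
            rw [← Set.image_preimage_eq A' pr_surjective, ← hAS, hASempty, Set.image_empty]
          have h0 : catLS A' ≤ 0 := hA'empty ▸ catLS_empty_le
          have hk : (1 : ℕ∞) ≤ catLS A' :=
            le_trans (by exact_mod_cast hk1) hA'cat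
          have : (1 : ℕ∞) ≤ 0 := le_trans hk h0
          norm_num at this
        · obtain ⟨m, hmk, hoddm⟩ := exists_hasOddMap_of_genus_lt
            (Set.nonempty_iff_ne_empty.mp hAEne) hcon
          obtain ⟨C, hCcl, hCc, hcov⟩ := cover_of_oddMap hAScl hASsym hoddm
          have hA'cov : A' ⊆ ⋃ i, C i := by
            rw [← Set.image_preimage_eq A' pr_surjective]
            exact hcov
          have hle := catLS_le_of_cover C hCcl hCc hA'cov
          have hlt : catLS A' < (k : ℕ∞) := lt_of_le_of_lt hle (Nat.cast_lt.mpr hmk)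
          exact absurd hA'cat (not_le.mpr hlt)
    refine le_trans (iInf₂_le AE hmem) (le_of_eq ?_)
    apply le_antisymm
    · apply iSup₂_le
      rintro x ⟨xs, hxs, rfl⟩
      rw [hFs xs]
      exact le_iSup₂ (f := fun a _ => ((f a : ℝ) : EReal)) (pr xs) hxs
    · apply iSup₂_le
      intro a ha
      obtain ⟨xs, rfl⟩ := pr_surjective a
      rw [← hFs xs]
      exact le_iSup₂ (f := fun x _ => ((F x : ℝ) : EReal)) ((xs : ↥(Sp n)) : Eu n) ⟨xs, ha, rfl⟩
  · -- hs ≤ kr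
    rw [kr, hs]
    apply le_iInf₂
    intro A hA
    obtain ⟨hsub, hcl, hsymm, hgen⟩ := hA
    set AS : Set ↥(Sp n) := Subtype.val ⁻¹' A with hAS
    set A' : Set (Pr n) := pr '' AS with hA'
    have hAScl : IsClosed AS := hcl.preimage continuous_subtype_val
    have hASsym : ∀ x ∈ AS, negS x ∈ AS := by
      intro x hx
      show -((x : ↥(Sp n)) : Eu n) ∈ A
      rw [hsymm, Set.mem_neg, neg_neg]
      exact hx
    have hmem : A' ∈ {A : Set (Pr n) | IsClosed A ∧ (k : ℕ∞) ≤ catLS A} := by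
      constructor
      · rw [isClosed_pr_iff, pr_preimage_image, negS_image_eq_preimage]
        exact hAScl.union (hAScl.preimage continuous_negS)
      · by_contra hcon
        push_neg at hcon
        obtain ⟨m, hmk, C, hCcl, hCc, hcov⟩ := exists_cover_of_catLS_lt hcon
        have hoddm : HasOddMap A m :=
          hasOddMap_of_cover hsub hcl hsymm C hCcl hCc hcov
        have hle := genus_le_of_hasOddMap hoddm
        have hlt : genus A < (k : ℕ∞) := lt_of_le_of_lt hle (Nat.cast_lt.mpr hmk)
        exact absurd hgen (not_le.mpr hlt)
    refine le_trans (iInf₂_le A' hmem) (le_of_eq ?_)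
    apply le_antisymm
    · apply iSup₂_le
      intro a ha
      obtain ⟨xs, hxs, rfl⟩ := ha
      rw [← hFs xs]
      exact le_iSup₂ (f := fun x _ => ((F x : ℝ) : EReal)) ((xs : ↥(Sp n)) : Eu n) hxs
    · apply iSup₂_le
      intro x hx
      have hxs : (⟨x, hsub hx⟩ : ↥(Sp n)) ∈ AS := hx
      rw [show x = ((⟨x, hsub hx⟩ : ↥(Sp n)) : Eu n) from rfl, hFs ⟨x, hsub hx⟩]
      exact le_iSup₂ (f := fun a _ => ((f a : ℝ) : EReal)) (pr ⟨x, hsub hx⟩) ⟨_, hxs, rfl⟩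

end
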